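/- Let G be a locally compact second countable group with left Haar measure μ, d ≥ 2 an integer, f ∈ L¹(G, μ), and let φ : G → ℂ be an M_d-multiplier. Then the convolution f * φ, defined by (f * φ)(x) = ∫_G f(y) φ(y⁻¹x) dμ(y), is again an M_d-multiplier, and ‖f * φ‖_{M_d} ≤ ‖f‖₁ · ‖φ‖_{M_d}. More precisely, for every factorization of φ of constant C there is a factorization of f * φ of constant at most ‖f‖₁ · C. -/

import Mathlib

open ComplexConjugate Filter Topology
open scoped ComplexInnerProductSpace

universe u

/-- A factorization of length `d` of a function `φ : G → ℂ` consists of complex Hilbert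
spaces `H 0, …, H d` with `H 0 = H d = ℂ` (witnessed by the linear isometric isomorphisms
`e0`, `ed`) together with bounded maps `xi i : G → B(H (i+1), H i)` such that
`φ (x 1 * ⋯ * x d)` equals `xi 1 (x 1) ∘ ⋯ ∘ xi d (x d)` applied to `1 ∈ ℂ = H d`,
read in `H 0 = ℂ`. -/
structure Factorization (d : ℕ) (G : Type*) [Group G] (φ : G → ℂ) where
  H : Fin (d + 1) → Type u
  [normed : ∀ i, NormedAddCommGroup (H i)]
  [ips : ∀ i, InnerProductSpace ℂ (H i)]
  [complete : ∀ i, CompleteSpace (H i)]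
  e0 : H 0 ≃ₗᵢ[ℂ] ℂ
  ed : H (Fin.last d) ≃ₗᵢ[ℂ] ℂ
  xi : ∀ i : Fin d, G → (H i.succ →L[ℂ] H i.castSucc)
  bdd : ∀ i : Fin d, ∃ M : ℝ, ∀ x : G, ‖xi i x‖ ≤ M
  factor : ∀ x : Fin d → G,
    φ (List.ofFn x).prod =
      e0 (Fin.reverseInduction (motive := fun i => H i) (ed.symm 1)
        (fun j v => xi j (x j) v) 0)

attribute [instance] Factorization.normed Factorization.ips Factorization.complete

namespace Factorization

variable {d : ℕ} {G : Type*} [Group G] {φ : G → ℂ}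

/-- The constant of a factorization, `∏ i, sup_x ‖xi i x‖`. -/
noncomputable def const (F : Factorization d G φ) : ℝ :=
  ∏ i : Fin d, ⨆ x : G, ‖F.xi i x‖

/-- The partial right product `xi (i+1) (x (i+1)) ⋯ xi d (x d) (1) ∈ H i`. -/
noncomputable def rightVec (F : Factorization d G φ) (x : Fin d → G) (i : Fin (d + 1)) :
    F.H i :=
  Fin.reverseInduction (motive := fun i => F.H i) (F.ed.symm 1)
    (fun j v => F.xi j (x j) v) i

/-- The partial left product `(xi 1 (x 1) ⋯ xi i (x i))^* (1) ∈ H i`. -/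
noncomputable def leftVec (F : Factorization d G φ) (x : Fin d → G) (i : Fin (d + 1)) :
    F.H i :=
  Fin.induction (motive := fun i => F.H i) (F.e0.symm 1)
    (fun j w => ContinuousLinearMap.adjoint (F.xi j (x j)) w) i

end Factorization

/-- `φ` is an `M_d`-multiplier: a bounded continuous function admitting a factorization
of length `d`. -/
def IsMdMultiplier (d : ℕ) {G : Type*} [Group G] [TopologicalSpace G] (φ : G → ℂ) : Prop :=
  Continuous φ ∧ (∃ M : ℝ, ∀ x : G, ‖φ x‖ ≤ M) ∧ Nonempty (Factorization.{0} d G φ)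

/-- The `M_d`-multiplier norm `‖φ‖_{M_d}`: the infimum of the constants over all
factorizations of length `d` of `φ`. -/
noncomputable def MdNorm (d : ℕ) {G : Type*} [Group G] (φ : G → ℂ) : ℝ :=
  sInf {C : ℝ | ∃ F : Factorization.{0} d G φ, F.const = C}

/-- A chain of bounded linear maps `eta i : L¹(G, μ) → B(K (i+1), K i)` between complex
Hilbert spaces `K 0, …, K d` with `K 0 = K d = ℂ`. -/
structure L1Chain (d : ℕ) {G : Type*} [Group G] [MeasurableSpace G]
    (μ : MeasureTheory.Measure G) where
  K : Fin (d + 1) → Type u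
  [normed : ∀ i, NormedAddCommGroup (K i)]
  [ips : ∀ i, InnerProductSpace ℂ (K i)]
  [complete : ∀ i, CompleteSpace (K i)]
  e0 : K 0 ≃ₗᵢ[ℂ] ℂ
  ed : K (Fin.last d) ≃ₗᵢ[ℂ] ℂ
  eta : ∀ i : Fin d, MeasureTheory.Lp ℂ 1 μ →L[ℂ] (K i.succ →L[ℂ] K i.castSucc)

attribute [instance] L1Chain.normed L1Chain.ips L1Chain.complete

open MeasureTheory

/-- Convolution of two functions on a group: `(f ∗ g) x = ∫ f y * g (y⁻¹ * x) dμ y`. -/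
noncomputable def conv {G : Type*} [Group G] [MeasurableSpace G] (μ : Measure G)
    (f g : G → ℂ) : G → ℂ :=
  fun x => ∫ y, f y * g (y⁻¹ * x) ∂μ

/-- Iterated convolution of a (nonempty) list of functions. -/
noncomputable def convProd {G : Type*} [Group G] [MeasurableSpace G] (μ : Measure G) :
    List (G → ℂ) → (G → ℂ)
  | [] => fun _ => 0
  | [f] => f
  | f :: g :: l => conv μ f (convProd μ (g :: l))

namespace L1Chain

variable {d : ℕ} {G : Type*} [Group G] [MeasurableSpace G] {μ : Measure G}

/-- The constant `∏ i, ‖eta i‖` of a chain. -/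
noncomputable def const (E : L1Chain d μ) : ℝ :=
  ∏ i : Fin d, ‖E.eta i‖

/-- The partial right product `eta (i+1) (f (i+1)) ⋯ eta d (f d) (1) ∈ K i`. -/
noncomputable def rightVec (E : L1Chain d μ) (f : Fin d → Lp ℂ 1 μ) (i : Fin (d + 1)) :
    E.K i :=
  Fin.reverseInduction (motive := fun i => E.K i) (E.ed.symm 1)
    (fun j v => E.eta j (f j) v) i

/-- The partial left product `(eta 1 (f 1) ⋯ eta i (f i))^* (1) ∈ K i`. -/
noncomputable def leftVec (E : L1Chain d μ) (f : Fin d → Lp ℂ 1 μ) (i : Fin (d + 1)) :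
    E.K i :=
  Fin.induction (motive := fun i => E.K i) (E.e0.symm 1)
    (fun j w => ContinuousLinearMap.adjoint (E.eta j (f j)) w) i

/-- The scalar `eta 1 (f 1) ⋯ eta d (f d) (1) ∈ ℂ`. -/
noncomputable def apply (E : L1Chain d μ) (f : Fin d → Lp ℂ 1 μ) : ℂ :=
  E.e0 (E.rightVec f 0)

end L1Chain

section ConvAux

namespace Factorization

variable {d : ℕ} {G : Type*} [Group G] {φ : G → ℂ}

theorem rightVec_last' (F : Factorization d G φ) (x : Fin d → G) :
    F.rightVec x (Fin.last d) = F.ed.symm 1 := Fin.reverseInduction_last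

theorem rightVec_castSucc' (F : Factorization d G φ) (x : Fin d → G) (j : Fin d) :
    F.rightVec x j.castSucc = F.xi j (x j) (F.rightVec x j.succ) :=
  Fin.reverseInduction_castSucc j

theorem factor' (F : Factorization d G φ) (x : Fin d → G) :
    φ (List.ofFn x).prod = F.e0 (F.rightVec x 0) := F.factor x

theorem rightVec_congr (F : Factorization d G φ) {x y : Fin d → G} :
    ∀ (i : Fin (d + 1)), (∀ j : Fin d, i ≤ j.castSucc → x j = y j) →
      F.rightVec x i = F.rightVec y i :=
  Fin.reverseInduction
    (fun _ => by rw [rightVec_last', rightVec_last'])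
    (fun j ih h => by
      rw [rightVec_castSucc', rightVec_castSucc', h j (le_refl _),
        ih (fun k hk => h k (le_trans (le_of_lt (Fin.castSucc_lt_succ (i := j))) hk))])

/-- span of the right vectors at level `i` -/
noncomputable def rSpan (F : Factorization d G φ) (i : Fin (d + 1)) : Submodule ℂ (F.H i) :=
  Submodule.span ℂ (Set.range fun z : Fin d → G => F.rightVec z i)

noncomputable def convS (F : Factorization d G φ) (i : Fin (d + 1)) : Submodule ℂ (F.H i) :=
  if i = 0 ∨ i = Fin.last d then ⊤ else (F.rSpan i).topologicalClosure

theorem convS_eq_top (F : Factorization d G φ) {i : Fin (d + 1)}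
    (h : i = 0 ∨ i = Fin.last d) : F.convS i = ⊤ := by
  simp only [convS]; rw [if_pos h]

theorem convS_zero (F : Factorization d G φ) : F.convS 0 = ⊤ := F.convS_eq_top (Or.inl rfl)

theorem convS_last (F : Factorization d G φ) : F.convS (Fin.last d) = ⊤ :=
  F.convS_eq_top (Or.inr rfl)

theorem convS_eq_closure (F : Factorization d G φ) {i : Fin (d + 1)}
    (h0 : i ≠ 0) (hl : i ≠ Fin.last d) : F.convS i = (F.rSpan i).topologicalClosure := by
  simp only [convS]; rw [if_neg (by tauto)]

theorem convS_isClosed (F : Factorization d G φ) (i : Fin (d + 1)) :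
    IsClosed (F.convS i : Set (F.H i)) := by
  by_cases h : i = 0 ∨ i = Fin.last d
  · rw [F.convS_eq_top h]; simp
  · push_neg at h
    rw [F.convS_eq_closure h.1 h.2]
    exact Submodule.isClosed_topologicalClosure _

theorem mem_closure_rSpan (F : Factorization d G φ) {i : Fin (d + 1)} (hi : i ≠ 0)
    {v : F.H i} (hv : v ∈ F.convS i) : v ∈ closure (F.rSpan i : Set (F.H i)) := by
  by_cases hl : i = Fin.last d
  · subst hl
    apply subset_closure
    have h1 : v = F.ed v • F.rightVec (fun _ => (1 : G)) (Fin.last d) := by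
      rw [F.rightVec_last', ← _root_.map_smul, smul_eq_mul, mul_one,
        LinearIsometryEquiv.symm_apply_apply]
    rw [h1]
    exact Submodule.smul_mem _ _ (Submodule.subset_span ⟨_, rfl⟩)
  · rw [F.convS_eq_closure hi hl] at hv
    rwa [← Submodule.topologicalClosure_coe]

theorem xi_mapsTo (F : Factorization d G φ) (i : Fin d) (x : G) {v : F.H i.succ}
    (hv : v ∈ F.convS i.succ) : F.xi i x v ∈ F.convS i.castSucc := by
  by_cases h0 : i.castSucc = (0 : Fin (d + 1))
  · rw [F.convS_eq_top (Or.inl h0)]; trivial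
  have hmaps : Set.MapsTo (F.xi i x) (F.rSpan i.succ : Set _) (F.rSpan i.castSucc : Set _) := by
    intro w hw
    induction hw using Submodule.span_induction with
    | mem w hw =>
      obtain ⟨z, rfl⟩ := hw
      have h : F.xi i x (F.rightVec z i.succ) = F.rightVec (Function.update z i x) i.castSucc := by
        rw [F.rightVec_castSucc', Function.update_self]
        congr 1
        refine (F.rightVec_congr i.succ fun k hk => ?_).symm
        refine Function.update_of_ne (fun hki : k = i => ?_) x z
        subst hki
        exact absurd hk (not_le.2 (Fin.castSucc_lt_succ (i := k)))
      rw [h]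
      exact Submodule.subset_span ⟨_, rfl⟩
    | zero => simpa using (F.rSpan i.castSucc).zero_mem
    | add a b _ _ ha hb => rw [map_add]; exact add_mem ha hb
    | smul c a _ ha => rw [_root_.map_smul]; exact Submodule.smul_mem _ _ ha
  have hcl : F.xi i x v ∈ closure (F.rSpan i.castSucc : Set _) :=
    map_mem_closure (F.xi i x).continuous (F.mem_closure_rSpan (Fin.succ_ne_zero i) hv) hmaps
  rw [F.convS_eq_closure h0 (Fin.castSucc_lt_last i).ne, ← SetLike.mem_coe,
    Submodule.topologicalClosure_coe]
  exact hcl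

end Factorization

open MeasureTheory

namespace Factorization

/-- `⊤` as a linear isometry equivalence. -/
noncomputable def topLIE (E : Type*) [NormedAddCommGroup E] [Module ℂ E] :
    (⊤ : Submodule ℂ E) ≃ₗᵢ[ℂ] E :=
  { Submodule.topEquiv with norm_map' := fun _ => rfl }

@[simp] theorem topLIE_symm_coe (E : Type*) [NormedAddCommGroup E] [Module ℂ E] (v : E) :
    (((topLIE E).symm v : (⊤ : Submodule ℂ E)) : E) = v := rfl

variable {n : ℕ} {G : Type*} [Group G] [TopologicalSpace G] [IsTopologicalGroup G]
  [MeasurableSpace G] [BorelSpace G] {φ : G → ℂ}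

theorem e0_xi_rightVec (F : Factorization (n + 1) G φ) (z : Fin (n + 1) → G) (g : G) :
    F.e0 (F.xi 0 g (F.rightVec z (0 : Fin (n + 1)).succ)) =
      φ (g * (List.ofFn fun j : Fin n => z j.succ).prod) := by
  have h1 := F.factor' (Function.update z 0 g)
  rw [List.ofFn_succ, List.prod_cons, Function.update_self] at h1
  have h2 : (fun i : Fin n => Function.update z 0 g i.succ) = fun i : Fin n => z i.succ :=
    funext fun i => Function.update_of_ne (Fin.succ_ne_zero i) _ _
  rw [h2] at h1
  rw [h1]
  have h3 : F.rightVec (Function.update z 0 g) (0 : Fin (n + 2)) =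
      F.xi 0 g (F.rightVec (Function.update z 0 g) (0 : Fin (n + 1)).succ) := by
    have h := F.rightVec_castSucc' (Function.update z 0 g) 0
    rw [Function.update_self] at h
    exact h
  rw [h3]
  congr 2
  refine F.rightVec_congr _ fun k hk => ?_
  refine (Function.update_of_ne (fun hk0 : k = 0 => ?_) g z).symm
  subst hk0
  exact absurd hk (by simp [Fin.le_def])

theorem measurable_conv_aux (F : Factorization (n + 1) G φ) (hφc : Continuous φ)
    (x : G) {v : F.H (0 : Fin (n + 1)).succ} (hv : v ∈ F.convS (0 : Fin (n + 1)).succ) :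
    Measurable fun y : G => F.e0 (F.xi 0 (y⁻¹ * x) v) := by
  have hgen : ∀ w ∈ F.rSpan (0 : Fin (n + 1)).succ,
      Measurable fun y : G => F.e0 (F.xi 0 (y⁻¹ * x) w) := by
    intro w hw
    induction hw using Submodule.span_induction with
    | mem w hw =>
      obtain ⟨z, rfl⟩ := hw
      simp only [e0_xi_rightVec]
      exact (hφc.comp ((continuous_inv.mul continuous_const).mul continuous_const)).measurable
    | zero => simp only [map_zero]; exact measurable_const
    | add a b _ _ ha hb =>
      simp only [map_add]; convert ha.add hb using 1; funext y; exact map_add F.e0 _ _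
    | smul c a _ ha =>
      simp only [_root_.map_smul, smul_eq_mul]; convert ha.const_mul c using 1; funext y
      exact map_smul F.e0 c _
  have hv' := F.mem_closure_rSpan (Fin.succ_ne_zero (0 : Fin (n + 1))) hv
  obtain ⟨u, hu, hlim⟩ := mem_closure_iff_seq_limit.1 hv'
  refine measurable_of_tendsto_metrizable' atTop (fun k => hgen (u k) (hu k)) ?_
  rw [tendsto_pi_nhds]
  intro y
  exact ((F.e0.continuous.comp (F.xi 0 (y⁻¹ * x)).continuous).tendsto v).comp hlim

variable (μ : Measure G) {f : G → ℂ}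

theorem integrable_conv_aux (F : Factorization (n + 1) G φ) (hφc : Continuous φ)
    (hf : Integrable f μ) {M0 : ℝ} (hM0 : ∀ g : G, ‖F.xi 0 g‖ ≤ M0) (x : G)
    {v : F.H (0 : Fin (n + 1)).succ} (hv : v ∈ F.convS (0 : Fin (n + 1)).succ) :
    Integrable (fun y => f y * F.e0 (F.xi 0 (y⁻¹ * x) v)) μ := by
  refine Integrable.mono' (hf.norm.mul_const (M0 * ‖v‖))
    (hf.aestronglyMeasurable.mul
      ((F.measurable_conv_aux hφc x hv).aestronglyMeasurable))
    (ae_of_all μ fun y => ?_)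
  rw [norm_mul]; refine (congrArg (‖f y‖ * ·) (F.e0.norm_map _)).trans_le ?_
  exact mul_le_mul_of_nonneg_left
    (((F.xi 0 _).le_opNorm v).trans
      (mul_le_mul_of_nonneg_right (hM0 _) (norm_nonneg v))) (norm_nonneg _)

theorem norm_integral_conv_aux (F : Factorization (n + 1) G φ) (hφc : Continuous φ)
    (hf : Integrable f μ) {M0 : ℝ} (hM0 : ∀ g : G, ‖F.xi 0 g‖ ≤ M0) (x : G)
    (v : F.H (0 : Fin (n + 1)).succ) :
    ‖∫ y, f y * F.e0 (F.xi 0 (y⁻¹ * x) v) ∂μ‖ ≤ ((∫ y, ‖f y‖ ∂μ) * M0) * ‖v‖ := by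
  have h := norm_integral_le_of_norm_le (f := fun y => f y * F.e0 (F.xi 0 (y⁻¹ * x) v))
    (hf.norm.mul_const (M0 * ‖v‖)) (ae_of_all μ fun y => by
      rw [norm_mul]; refine (congrArg (‖f y‖ * ·) (F.e0.norm_map _)).trans_le ?_
      exact mul_le_mul_of_nonneg_left
        (((F.xi 0 _).le_opNorm v).trans
          (mul_le_mul_of_nonneg_right (hM0 _) (norm_nonneg v))) (norm_nonneg _))
  calc ‖∫ y, f y * F.e0 (F.xi 0 (y⁻¹ * x) v) ∂μ‖ ≤ ∫ y, ‖f y‖ * (M0 * ‖v‖) ∂μ := h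
    _ = ((∫ y, ‖f y‖ ∂μ) * M0) * ‖v‖ := by rw [integral_mul_const, mul_assoc]

/-- The convolved first leg, as a continuous linear functional. -/
noncomputable def convCLM (F : Factorization (n + 1) G φ) (hφc : Continuous φ)
    (hf : Integrable f μ) {M0 : ℝ} (hM0 : ∀ g : G, ‖F.xi 0 g‖ ≤ M0) (x : G) :
    ↥(F.convS (0 : Fin (n + 1)).succ) →L[ℂ] ℂ :=
  LinearMap.mkContinuous
    { toFun := fun v => ∫ y, f y * F.e0 (F.xi 0 (y⁻¹ * x) ↑v) ∂μ
      map_add' := fun v w => by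
        simp only [Submodule.coe_add, map_add, mul_add]
        refine (integral_congr_ae (ae_of_all μ fun y => ?_)).trans
          (integral_add (F.integrable_conv_aux μ hφc hf hM0 x v.2)
          (F.integrable_conv_aux μ hφc hf hM0 x w.2))
        exact (congrArg (f y * ·) (map_add F.e0 _ _)).trans (mul_add _ _ _)
      map_smul' := fun c v => by
        simp only [Submodule.coe_smul, _root_.map_smul, smul_eq_mul, RingHom.id_apply,
          mul_left_comm]
        refine (integral_congr_ae (ae_of_all μ fun y => ?_)).trans (integral_const_mul c _)
        exact (congrArg (f y * ·) (map_smul F.e0 c _)).trans (mul_left_comm _ _ _) }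
    ((∫ y, ‖f y‖ ∂μ) * M0)
    (fun v => F.norm_integral_conv_aux μ hφc hf hM0 x ↑v)

theorem convCLM_apply (F : Factorization (n + 1) G φ) (hφc : Continuous φ)
    (hf : Integrable f μ) {M0 : ℝ} (hM0 : ∀ g : G, ‖F.xi 0 g‖ ≤ M0) (x : G)
    (v : ↥(F.convS (0 : Fin (n + 1)).succ)) :
    convCLM μ F hφc hf hM0 x v = ∫ y, f y * F.e0 (F.xi 0 (y⁻¹ * x) ↑v) ∂μ := rfl

theorem norm_convCLM_apply_le (F : Factorization (n + 1) G φ) (hφc : Continuous φ)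
    (hf : Integrable f μ) {M0 : ℝ} (hM0 : ∀ g : G, ‖F.xi 0 g‖ ≤ M0) (x : G)
    (v : ↥(F.convS (0 : Fin (n + 1)).succ)) :
    ‖convCLM μ F hφc hf hM0 x v‖ ≤ ((∫ y, ‖f y‖ ∂μ) * M0) * ‖v‖ :=
  F.norm_integral_conv_aux μ hφc hf hM0 x ↑v

end Factorization

namespace Factorization

variable {n : ℕ} {G : Type*} [Group G] [TopologicalSpace G] [IsTopologicalGroup G]
  [MeasurableSpace G] [BorelSpace G] {φ : G → ℂ} {μ : MeasureTheory.Measure G} {f : G → ℂ}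

open MeasureTheory

noncomputable def conve0 (F : Factorization (n + 1) G φ) :
    ↥(F.convS 0) ≃ₗᵢ[ℂ] ℂ :=
  (LinearIsometryEquiv.ofEq _ _ F.convS_zero).trans ((topLIE _).trans F.e0)

noncomputable def conved (F : Factorization (n + 1) G φ) :
    ↥(F.convS (Fin.last (n + 1))) ≃ₗᵢ[ℂ] ℂ :=
  (LinearIsometryEquiv.ofEq _ _ F.convS_last).trans ((topLIE _).trans F.ed)

theorem conved_symm_coe (F : Factorization (n + 1) G φ) (c : ℂ) :
    ((F.conved.symm c : ↥(F.convS (Fin.last (n + 1)))) : F.H (Fin.last (n + 1))) =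
      F.ed.symm c := rfl

noncomputable def convXi (F : Factorization (n + 1) G φ) (hφc : Continuous φ)
    (hf : Integrable f μ) {M0 : ℝ} (hM0 : ∀ g : G, ‖F.xi 0 g‖ ≤ M0) :
    ∀ i : Fin (n + 1), G → (↥(F.convS i.succ) →L[ℂ] ↥(F.convS i.castSucc)) := fun i =>
  Fin.cases
    (motive := fun i : Fin (n + 1) => G → (↥(F.convS i.succ) →L[ℂ] ↥(F.convS i.castSucc)))
    (fun x => (F.conve0.symm.toContinuousLinearEquiv.toContinuousLinearMap).comp
      (convCLM μ F hφc hf hM0 x))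
    (fun j x => ContinuousLinearMap.codRestrict
      ((F.xi j.succ x).comp (F.convS j.succ.succ).subtypeL) (F.convS j.succ.castSucc)
      (fun v => F.xi_mapsTo j.succ x v.2)) i

theorem convXi_zero (F : Factorization (n + 1) G φ) (hφc : Continuous φ)
    (hf : Integrable f μ) {M0 : ℝ} (hM0 : ∀ g : G, ‖F.xi 0 g‖ ≤ M0) :
    convXi F hφc hf hM0 0 = fun x =>
      (F.conve0.symm.toContinuousLinearEquiv.toContinuousLinearMap).comp
        (convCLM μ F hφc hf hM0 x) :=
  Fin.cases_zero ..

theorem convXi_succ (F : Factorization (n + 1) G φ) (hφc : Continuous φ)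
    (hf : Integrable f μ) {M0 : ℝ} (hM0 : ∀ g : G, ‖F.xi 0 g‖ ≤ M0) (j : Fin n) :
    convXi F hφc hf hM0 j.succ = fun x => ContinuousLinearMap.codRestrict
      ((F.xi j.succ x).comp (F.convS j.succ.succ).subtypeL) (F.convS j.succ.castSucc)
      (fun v => F.xi_mapsTo j.succ x v.2) :=
  Fin.cases_succ ..

end Factorization

namespace Factorization

variable {n : ℕ} {G : Type*} [Group G] [TopologicalSpace G] [IsTopologicalGroup G]
  [MeasurableSpace G] [BorelSpace G] {φ : G → ℂ} {μ : MeasureTheory.Measure G} {f : G → ℂ}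

open MeasureTheory

theorem norm_convXi_zero_le (F : Factorization (n + 1) G φ) (hφc : Continuous φ)
    (hf : Integrable f μ) {M0 : ℝ} (hM0 : ∀ g : G, ‖F.xi 0 g‖ ≤ M0) (x : G) :
    ‖convXi F hφc hf hM0 0 x‖ ≤ (∫ y, ‖f y‖ ∂μ) * M0 := by
  rw [convXi_zero]
  have hM0' : 0 ≤ M0 := (norm_nonneg (F.xi 0 1)).trans (hM0 1)
  have hA : 0 ≤ ∫ y, ‖f y‖ ∂μ := integral_nonneg fun y => norm_nonneg _
  refine ContinuousLinearMap.opNorm_le_bound _ (mul_nonneg hA hM0') fun v => ?_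
  rw [ContinuousLinearMap.comp_apply]
  have h1 : ‖(F.conve0.symm.toContinuousLinearEquiv.toContinuousLinearMap)
      (convCLM μ F hφc hf hM0 x v)‖ = ‖convCLM μ F hφc hf hM0 x v‖ := by
    simp
  rw [h1]
  exact F.norm_convCLM_apply_le μ hφc hf hM0 x v

theorem norm_convXi_succ_le (F : Factorization (n + 1) G φ) (hφc : Continuous φ)
    (hf : Integrable f μ) {M0 : ℝ} (hM0 : ∀ g : G, ‖F.xi 0 g‖ ≤ M0) (j : Fin n) (x : G) :
    ‖convXi F hφc hf hM0 j.succ x‖ ≤ ‖F.xi j.succ x‖ := by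
  rw [convXi_succ]
  refine ContinuousLinearMap.opNorm_le_bound _ (norm_nonneg _) fun v => ?_
  exact (F.xi j.succ x).le_opNorm ↑v

theorem coe_convRightVec (F : Factorization (n + 1) G φ) (hφc : Continuous φ)
    (hf : Integrable f μ) {M0 : ℝ} (hM0 : ∀ g : G, ‖F.xi 0 g‖ ≤ M0) (x : Fin (n + 1) → G) :
    ∀ (i : Fin (n + 2)), i ≠ 0 →
      ((Fin.reverseInduction (motive := fun i => ↥(F.convS i)) (F.conved.symm 1)
        (fun j v => convXi F hφc hf hM0 j (x j) v) i : ↥(F.convS i)) : F.H i) =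
        F.rightVec x i :=
  Fin.reverseInduction
    (fun _ => by
      rw [Fin.reverseInduction_last, F.rightVec_last']
      exact F.conved_symm_coe 1)
    (fun j ih hj => by
      have hj0 : j ≠ 0 := by
        intro h; subst h; exact hj (by simp)
      obtain ⟨k, rfl⟩ := Fin.exists_succ_eq.2 hj0
      rw [Fin.reverseInduction_castSucc, F.rightVec_castSucc']
      rw [convXi_succ]
      simp only [ContinuousLinearMap.coe_codRestrict_apply, ContinuousLinearMap.comp_apply,
        Submodule.subtypeL_apply]
      exact congrArg (F.xi k.succ (x k.succ)) (ih (Fin.succ_ne_zero _)))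

end Factorization

namespace Factorization

variable {n : ℕ} {G : Type*} [Group G] [TopologicalSpace G] [IsTopologicalGroup G]
  [MeasurableSpace G] [BorelSpace G] {φ : G → ℂ} {μ : MeasureTheory.Measure G} {f : G → ℂ}

open MeasureTheory

theorem conve0_convXi_zero (F : Factorization (n + 1) G φ) (hφc : Continuous φ)
    (hf : Integrable f μ) {M0 : ℝ} (hM0 : ∀ g : G, ‖F.xi 0 g‖ ≤ M0) (x : G)
    (v : ↥(F.convS (0 : Fin (n + 1)).succ)) :
    F.conve0 (convXi F hφc hf hM0 0 x v) = convCLM μ F hφc hf hM0 x v := by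
  rw [convXi_zero]
  exact F.conve0.apply_symm_apply _

set_option synthInstance.maxHeartbeats 1000000 in
set_option maxHeartbeats 1000000 in
/-- The factorization of the convolution. -/
noncomputable def convFact (F : Factorization (n + 1) G φ) (hφc : Continuous φ)
    (hf : Integrable f μ) {M0 : ℝ} (hM0 : ∀ g : G, ‖F.xi 0 g‖ ≤ M0) :
    Factorization (n + 1) G (conv μ f φ) where
  H i := ↥(F.convS i)
  normed i := inferInstance
  ips i := inferInstance
  complete i := (F.convS_isClosed i).completeSpace_coe
  e0 := F.conve0
  ed := F.conved
  xi := convXi F hφc hf hM0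
  bdd i := by
    induction i using Fin.cases with
    | zero => exact ⟨(∫ y, ‖f y‖ ∂μ) * M0, fun x => F.norm_convXi_zero_le hφc hf hM0 x⟩
    | succ j =>
      obtain ⟨M, hM⟩ := F.bdd j.succ
      exact ⟨M, fun x => (F.norm_convXi_succ_le hφc hf hM0 j x).trans (hM x)⟩
  factor x := by
    show conv μ f φ (List.ofFn x).prod =
      F.conve0 (Fin.reverseInduction (motive := fun i => ↥(F.convS i)) (F.conved.symm 1)
        (fun j v => convXi F hφc hf hM0 j (x j) v) ((0 : Fin (n + 1)).castSucc))
    rw [Fin.reverseInduction_castSucc, conve0_convXi_zero, convCLM_apply]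
    rw [coe_convRightVec F hφc hf hM0 x _ (Fin.succ_ne_zero 0)]
    show (∫ y, f y * φ (y⁻¹ * (List.ofFn x).prod) ∂μ) = _
    congr 1
    funext y
    congr 1
    rw [e0_xi_rightVec]
    congr 1
    rw [show (List.ofFn x).prod = x 0 * (List.ofFn fun j : Fin n => x j.succ).prod by
      rw [List.ofFn_succ, List.prod_cons], ← mul_assoc]

set_option synthInstance.maxHeartbeats 1000000 in
set_option maxHeartbeats 1000000 in
theorem convFact_const_le (F : Factorization (n + 1) G φ) (hφc : Continuous φ)
    (hf : Integrable f μ) (hM0 : ∀ g : G, ‖F.xi 0 g‖ ≤ ⨆ x : G, ‖F.xi 0 x‖) :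
    (convFact F hφc hf hM0).const ≤ (∫ y, ‖f y‖ ∂μ) * F.const := by
  have hne : Nonempty G := ⟨1⟩
  have hxi : (convFact F hφc hf hM0).xi = convXi F hφc hf hM0 := rfl
  unfold const
  rw [Fin.prod_univ_succ,
    Fin.prod_univ_succ, ← mul_assoc]
  have hA : 0 ≤ ∫ y, ‖f y‖ ∂μ := integral_nonneg fun y => norm_nonneg _
  have hM0nn : 0 ≤ ⨆ x : G, ‖F.xi 0 x‖ := Real.iSup_nonneg fun x => norm_nonneg _
  refine mul_le_mul ?_ ?_ ?_ ?_
  · exact ciSup_le fun x => F.norm_convXi_zero_le hφc hf hM0 x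
  · refine Finset.prod_le_prod
      (fun j _ => Real.iSup_nonneg fun x => ContinuousLinearMap.opNorm_nonneg _)
      fun j _ => ?_
    refine ciSup_le fun x => (F.norm_convXi_succ_le hφc hf hM0 j x).trans ?_
    obtain ⟨M, hM⟩ := F.bdd j.succ
    exact le_ciSup ⟨M, by rintro r ⟨z, rfl⟩; exact hM z⟩ x
  · exact Finset.prod_nonneg fun j _ =>
      Real.iSup_nonneg fun x => ContinuousLinearMap.opNorm_nonneg _
  · exact mul_nonneg hA hM0nn

end Factorization

namespace Factorization

variable {n : ℕ} {G : Type*} [Group G] [TopologicalSpace G] [IsTopologicalGroup G]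
  [MeasurableSpace G] [BorelSpace G] {φ : G → ℂ} {μ : MeasureTheory.Measure G} {f : G → ℂ}

open MeasureTheory

theorem exists_convFact (F : Factorization.{v} (n + 1) G φ) (hφc : Continuous φ)
    (hf : Integrable f μ) :
    ∃ F' : Factorization.{v} (n + 1) G (conv μ f φ),
      F'.const ≤ (∫ y, ‖f y‖ ∂μ) * F.const := by
  have hM0 : ∀ g : G, ‖F.xi 0 g‖ ≤ ⨆ x : G, ‖F.xi 0 x‖ := by
    intro g
    obtain ⟨M, hM⟩ := F.bdd 0
    exact le_ciSup ⟨M, by rintro r ⟨z, rfl⟩; exact hM z⟩ g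
  exact ⟨convFact F hφc hf hM0, convFact_const_le F hφc hf hM0⟩

theorem const_nonneg {d : ℕ} {ψ : G → ℂ} (F : Factorization d G ψ) : 0 ≤ F.const :=
  Finset.prod_nonneg fun _ _ =>
    Real.iSup_nonneg fun _ => ContinuousLinearMap.opNorm_nonneg _

theorem conv_continuous [FirstCountableTopology G] (hφc : Continuous φ) {Mφ : ℝ}
    (hMφ : ∀ x : G, ‖φ x‖ ≤ Mφ) (hf : Integrable f μ) : Continuous (conv μ f φ) := by
  show Continuous fun x => ∫ y, f y * φ (y⁻¹ * x) ∂μ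
  refine continuous_of_dominated (bound := fun y => ‖f y‖ * Mφ) ?_ ?_ ?_ ?_
  · intro x
    exact hf.aestronglyMeasurable.mul
      ((hφc.comp (continuous_inv.mul continuous_const)).aestronglyMeasurable)
  · intro x
    exact ae_of_all μ fun y => by
      rw [norm_mul]; exact mul_le_mul_of_nonneg_left (hMφ _) (norm_nonneg _)
  · exact hf.norm.mul_const Mφ
  · exact ae_of_all μ fun y =>
      continuous_const.mul (hφc.comp (continuous_const.mul continuous_id))

theorem norm_conv_le {Mφ : ℝ} (hMφ : ∀ x : G, ‖φ x‖ ≤ Mφ) (hf : Integrable f μ) (x : G) :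
    ‖conv μ f φ x‖ ≤ (∫ y, ‖f y‖ ∂μ) * Mφ := by
  have h := norm_integral_le_of_norm_le (f := fun y => f y * φ (y⁻¹ * x))
    (hf.norm.mul_const Mφ) (ae_of_all μ fun y => by
      rw [norm_mul]; exact mul_le_mul_of_nonneg_left (hMφ _) (norm_nonneg _))
  calc ‖conv μ f φ x‖ = ‖∫ y, f y * φ (y⁻¹ * x) ∂μ‖ := rfl
    _ ≤ ∫ y, ‖f y‖ * Mφ ∂μ := h
    _ = (∫ y, ‖f y‖ ∂μ) * Mφ := integral_mul_const Mφ _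

end Factorization


end ConvAux

open Factorization in
/-- If `f ∈ L¹(G)` and `φ ∈ M_d(G)`, then `f * φ ∈ M_d(G)` with
`‖f * φ‖_{M_d} ≤ ‖f‖₁ ‖φ‖_{M_d}`; more precisely every factorization of `φ` of constant
`C` yields a factorization of `f * φ` of constant at most `‖f‖₁ * C`. -/
theorem isMdMultiplier_conv
    {G : Type*} [Group G] [TopologicalSpace G] [IsTopologicalGroup G]
    [LocallyCompactSpace G] [SecondCountableTopology G]
    [MeasurableSpace G] [BorelSpace G] (μ : Measure G) [μ.IsHaarMeasure]
    (d : ℕ) (hd : 2 ≤ d)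
    (f : G → ℂ) (hf : Integrable f μ)
    (φ : G → ℂ) (hφ : IsMdMultiplier d φ) :
    IsMdMultiplier d (conv μ f φ) ∧
    MdNorm d (conv μ f φ) ≤ (∫ y, ‖f y‖ ∂μ) * MdNorm d φ ∧
    ∀ F : Factorization.{u} d G φ,
      ∃ F' : Factorization.{u} d G (conv μ f φ),
        F'.const ≤ (∫ y, ‖f y‖ ∂μ) * F.const := by
  obtain ⟨m, rfl⟩ : ∃ m, d = m + 1 := ⟨d - 1, by omega⟩
  obtain ⟨hφc, ⟨Mφ, hMφ⟩, ⟨F0⟩⟩ := hφ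
  have hA : 0 ≤ ∫ y, ‖f y‖ ∂μ := integral_nonneg fun y => norm_nonneg _
  obtain ⟨F0', _⟩ := exists_convFact F0 hφc hf
  refine ⟨⟨conv_continuous hφc hMφ hf, ⟨(∫ y, ‖f y‖ ∂μ) * Mφ, norm_conv_le hMφ hf⟩, ⟨F0'⟩⟩,
    ?_, fun F => exists_convFact F hφc hf⟩
  have hbdd : BddBelow {C : ℝ | ∃ F' : Factorization.{0} (m + 1) G (conv μ f φ),
      F'.const = C} := ⟨0, by rintro C ⟨F', rfl⟩; exact const_nonneg F'⟩
  have hkey : ∀ C ∈ {C : ℝ | ∃ F : Factorization.{0} (m + 1) G φ, F.const = C},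
      MdNorm (m + 1) (conv μ f φ) ≤ (∫ y, ‖f y‖ ∂μ) * C := by
    rintro C ⟨F, rfl⟩
    obtain ⟨F', hF'⟩ := exists_convFact F hφc hf
    exact (csInf_le hbdd ⟨F', rfl⟩).trans hF'
  have hSne : {C : ℝ | ∃ F : Factorization.{0} (m + 1) G φ, F.const = C}.Nonempty :=
    ⟨F0.const, F0, rfl⟩
  rcases eq_or_lt_of_le hA with hA0 | hA0
  · have h1 := hkey F0.const ⟨F0, rfl⟩
    rw [← hA0, zero_mul] at h1
    rw [← hA0, zero_mul]
    exact h1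
  · have h2 : MdNorm (m + 1) (conv μ f φ) / (∫ y, ‖f y‖ ∂μ) ≤ MdNorm (m + 1) φ := by
      refine le_csInf hSne fun C hC => ?_
      rw [div_le_iff₀ hA0]
      exact (hkey C hC).trans_eq (mul_comm _ _)
    rw [mul_comm]
    exact (div_le_iff₀ hA0).1 h2
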